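/- Let G be an observation and b a fair branch of G (a maximal path containing infinitely many vertices at each live location of G). Let t be a sequence compatible with G (its projection on output events is the event-sequence of some topological ordering of the vertices of G) and let ε be the event sequence of b. Then there exists a subsequence t' of t such that the projection of t' on output events equals ε and t' is a valid sequence (i.e., t' is a strong sampling of t). -/

import Mathlib

/-- An observation: a DAG on vertices (location, positive index, action). -/
structure Observation (P E : Type*) where
  V : Set (P × ℕ × E)
  Z : Set ((P × ℕ × E) × (P × ℕ × E))
  edge_mem : ∀ p ∈ Z, p.1 ∈ V ∧ p.2 ∈ V
  pos_index : ∀ v ∈ V, 0 < v.2.1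
  unique_index : ∀ v ∈ V, ∀ w ∈ V, v.1 = w.1 → v.2.1 = w.2.1 → v = w
  downward : ∀ v ∈ V, ∀ k : ℕ, 0 < k → k < v.2.1 → ∃ e : E, (v.1, k, e) ∈ V
  consec : ∀ v ∈ V, ∀ w ∈ V, w.1 = v.1 → w.2.1 = v.2.1 + 1 → (v, w) ∈ Z
  live_edge : ∀ i j : P, i ≠ j → {w ∈ V | w.1 = j}.Infinite →
      ∀ v ∈ V, v.1 = i → ∃ w ∈ V, w.1 = j ∧ (v, w) ∈ Z
  trans : ∀ u v w, (u, v) ∈ Z → (v, w) ∈ Z → (u, w) ∈ Z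
  irrefl : ∀ v, (v, v) ∉ Z

/-- A location is live in an observation iff infinitely many vertices have that location. -/
def Observation.live {P E : Type*} (G : Observation P E) (i : P) : Prop :=
  {v ∈ G.V | v.1 = i}.Infinite

/-- A (finite or infinite) sequence of actions, modeled as `ℕ → Option A` whose support
is an initial segment. -/
structure Trace (A : Type*) where
  f : ℕ → Option A
  stable : ∀ n : ℕ, f n = none → f (n + 1) = none

/-- `t'` is a subsequence of `t`. -/
def IsSubseq {A : Type*} (t' t : Trace A) : Prop :=
  ∃ g : ℕ → ℕ, StrictMono g ∧ ∀ n a, t'.f n = some a → t.f (g n) = some a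

/-- Actions of an AFD setting: crash events and output events (an output event `e` has a
location `loc e`). -/
inductive FDAct (P E : Type*) where
  | crash (i : P)
  | out (e : E)

/-- Location `i` crashes in trace `t`. -/
def FDCrashes {P E : Type*} (t : Trace (FDAct P E)) (i : P) : Prop :=
  ∃ n, t.f n = some (FDAct.crash i)

/-- A valid sequence: no output at location `i` follows a `crash_i` event, and every
uncrashed location has infinitely many output events. -/
def FDValid {P E : Type*} (loc : E → P) (t : Trace (FDAct P E)) : Prop :=
  (∀ (i : P) (n m : ℕ) (e : E),
      t.f n = some (FDAct.crash i) → n < m → t.f m = some (FDAct.out e) → loc e ≠ i) ∧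
  (∀ i : P, ¬ FDCrashes t i →
      {n | ∃ e, loc e = i ∧ t.f n = some (FDAct.out e)}.Infinite)

/-- `t` is compatible with observation `G`: the projection of `t` on output events is the
event-sequence of some topological ordering `σ` of the vertices of `G`. -/
def Compatible {P E : Type*} (loc : E → P) (t : Trace (FDAct P E))
    (G : Observation P E) : Prop :=
  ∃ (σ : Trace (P × ℕ × E)) (g : ℕ → ℕ),
    StrictMono g ∧
    (∀ n v, σ.f n = some v → v ∈ G.V) ∧
    (∀ v ∈ G.V, ∃! n, σ.f n = some v) ∧
    (∀ m n u v, σ.f m = some u → σ.f n = some v → (u, v) ∈ G.Z → m < n) ∧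
    (∀ n v, σ.f n = some v → t.f (g n) = some (FDAct.out v.2.2)) ∧
    (∀ m e, t.f m = some (FDAct.out e) →
      ∃ n v, σ.f n = some v ∧ v.2.2 = e ∧ g n = m)

/-- `b` is a fair branch of `G`: a maximal path of `G` containing infinitely many
vertices at each live location of `G`. -/
def IsFairBranch {P E : Type*} (G : Observation P E)
    (b : Trace (P × ℕ × E)) : Prop :=
  (∀ n v, b.f n = some v → v ∈ G.V) ∧
  (∀ n u v, b.f n = some u → b.f (n + 1) = some v → (u, v) ∈ G.Z) ∧
  (∀ n u, b.f n = some u → b.f (n + 1) = none → ∀ w ∈ G.V, (u, w) ∉ G.Z) ∧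
  (∀ u, b.f 0 = some u → ∀ w ∈ G.V, (w, u) ∉ G.Z) ∧
  (∀ i : P, G.live i → {n | ∃ v, b.f n = some v ∧ v.1 = i}.Infinite)

/-- The projection of `t'` on output events equals the event-sequence of the vertex
sequence `b`. -/
def OutProjEq {P E : Type*} (t' : Trace (FDAct P E))
    (b : Trace (P × ℕ × E)) : Prop :=
  ∃ g : ℕ → ℕ, StrictMono g ∧
    (∀ n v, b.f n = some v → t'.f (g n) = some (FDAct.out v.2.2)) ∧
    (∀ m e, t'.f m = some (FDAct.out e) →
      ∃ n v, b.f n = some v ∧ v.2.2 = e ∧ g n = m)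

open scoped Classical

/-- Pick a position where `f` takes value `some v`, if any. -/
noncomputable def choosePos {α : Type*} (f : ℕ → Option α) (v : α) : ℕ :=
  if h : ∃ n, f n = some v then h.choose else 0

lemma choosePos_spec {α : Type*} (f : ℕ → Option α) (v : α)
    (h : ∃ n, f n = some v) : f (choosePos f v) = some v := by
  rw [choosePos, dif_pos h]; exact h.choose_spec

/-- The increasing enumeration of a set of naturals, as an `Option`-valued sequence. -/
noncomputable def enum (S : ℕ → Prop) : ℕ → Option ℕ
  | 0 => if h : ∃ m, S m then some (Nat.find h) else none
  | n+1 =>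
    match enum S n with
    | none => none
    | some m => if h : ∃ k, S k ∧ m < k then some (Nat.find h) else none

lemma enum_succ (S : ℕ → Prop) (n : ℕ) :
    enum S (n + 1) = match enum S n with
      | none => none
      | some m => if h : ∃ k, S k ∧ m < k then some (Nat.find h) else none := rfl

lemma enum_mem (S : ℕ → Prop) : ∀ n m, enum S n = some m → S m := by
  intro n
  induction n with
  | zero =>
    intro m h
    rw [enum] at h
    split at h
    · cases h; exact Nat.find_spec ‹_›
    · cases h
  | succ k ih =>
    intro m h
    rw [enum_succ] at h
    split at h
    · cases h
    · split at h
      · cases h; exact (Nat.find_spec ‹∃ k', S k' ∧ _ < k'›).1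
      · cases h

lemma enum_stable (S : ℕ → Prop) : ∀ n, enum S n = none → enum S (n+1) = none := by
  intro n h; rw [enum_succ, h]

lemma enum_lt (S : ℕ → Prop) :
    ∀ n a b, enum S n = some a → enum S (n+1) = some b → a < b := by
  intro n a b ha hb
  rw [enum_succ, ha] at hb
  by_cases hex : ∃ k, S k ∧ a < k
  · rw [show (match some a with
      | none => none
      | some m => if h : ∃ k, S k ∧ m < k then some (Nat.find h) else none)
      = some (Nat.find hex) from dif_pos hex] at hb
    cases hb; exact (Nat.find_spec hex).2
  · rw [show (match some a with
      | none => none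
      | some m => if h : ∃ k, S k ∧ m < k then some (Nat.find h) else none)
      = none from dif_neg hex] at hb
    cases hb

/-- extend a partial increasing sequence (supported on an initial segment) to a total
strictly monotone function. -/
noncomputable def extendFn (f : ℕ → Option ℕ) : ℕ → ℕ
  | 0 => (f 0).getD 0
  | n+1 => (f (n+1)).getD (extendFn f n + 1)

lemma extend_mono (f : ℕ → Option ℕ)
    (hst : ∀ n, f n = none → f (n+1) = none)
    (hlt : ∀ n a b, f n = some a → f (n+1) = some b → a < b) :
    ∃ g : ℕ → ℕ, StrictMono g ∧ ∀ n m, f n = some m → g n = m := by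
  have hmatch : ∀ n m, f n = some m → extendFn f n = m := by
    intro n m h
    cases n with
    | zero => rw [extendFn, h]; rfl
    | succ k => rw [extendFn, h]; rfl
  refine ⟨extendFn f, strictMono_nat_of_lt_succ ?_, hmatch⟩
  intro n
  cases h : f (n+1) with
  | none =>
    show extendFn f n < extendFn f (n+1)
    rw [extendFn, h]; simp
  | some b =>
    cases h0 : f n with
    | none => rw [hst n h0] at h; cases h
    | some a =>
      have h1 := hlt n a b h0 h
      have h2 := hmatch n a h0
      have h3 := hmatch (n+1) b h
      omega

lemma enum_surj (S : ℕ → Prop) : ∀ m, S m → ∃ n, enum S n = some m := by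
  intro m
  induction m using Nat.strong_induction_on with
  | _ m ih =>
    intro hm
    by_cases hk : ∃ k, S k ∧ k < m
    · obtain ⟨k, hkS, hkm⟩ := hk
      set k0 := Nat.findGreatest S (m-1) with hk0
      have hk0S : S k0 := Nat.findGreatest_spec (m := k) (by omega) hkS
      have hk0m : k0 < m := by
        have := Nat.findGreatest_le (P := S) (m - 1)
        omega
      obtain ⟨n, hn⟩ := ih k0 hk0m hk0S
      refine ⟨n + 1, ?_⟩
      rw [enum_succ, hn]
      have hex : ∃ j, S j ∧ k0 < j := ⟨m, hm, hk0m⟩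
      show (if h : ∃ k, S k ∧ k0 < k then some (Nat.find h) else none) = some m
      rw [dif_pos hex]
      congr 1
      have h1 : Nat.find hex ≤ m := Nat.find_le ⟨hm, hk0m⟩
      have h2 : ¬ (Nat.find hex < m) := by
        intro hlt
        have hsp := Nat.find_spec hex
        exact Nat.findGreatest_is_greatest (by omega : k0 < Nat.find hex)
          (by omega) hsp.1
      omega
    · refine ⟨0, ?_⟩
      rw [enum]
      have hex : ∃ j, S j := ⟨m, hm⟩
      rw [dif_pos hex]
      congr 1
      have h1 : Nat.find hex ≤ m := Nat.find_le hm
      have h2 : ¬ (Nat.find hex < m) := fun hlt => hk ⟨Nat.find hex, Nat.find_spec hex, hlt⟩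
      omega

/-- For a valid trace `t` compatible with an observation `G` and a fair
branch `b` of `G` with event sequence `ε`, there is a strong sampling `t'` of `t`
(a subsequence that is itself valid) whose projection on output events equals `ε`. -/
theorem fair_branch_strong_sampling {P E : Type*}
    (loc : E → P) (G : Observation P E)
    (hloc : ∀ v ∈ G.V, loc v.2.2 = v.1)
    (t : Trace (FDAct P E)) (hval : FDValid loc t) (hcomp : Compatible loc t G)
    (b : Trace (P × ℕ × E)) (hb : IsFairBranch G b) :
    ∃ t' : Trace (FDAct P E),
      IsSubseq t' t ∧ FDValid loc t' ∧ OutProjEq t' b := by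
  classical
  obtain ⟨σ, g, hgmono, hσV, hσuniq, hσord, hσt, htσ⟩ := hcomp
  obtain ⟨hbV, hbZ, _hbmax, _hbinit, hbfair⟩ := hb
  set σpos : (P × ℕ × E) → ℕ := fun v => choosePos σ.f v with hσposdef
  have hσpos_spec : ∀ v ∈ G.V, σ.f (σpos v) = some v := fun v hv =>
    choosePos_spec σ.f v (hσuniq v hv).exists
  set S : ℕ → Prop := fun m =>
    (∃ n v, b.f n = some v ∧ m = g (σpos v)) ∨ (∃ i, t.f m = some (FDAct.crash i))
    with hSdef
  have mS : ∀ j v, b.f j = some v → S (g (σpos v)) := by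
    intro j v h
    rw [hSdef]
    exact Or.inl ⟨j, v, h, rfl⟩
  have hS_some : ∀ m, S m → t.f m ≠ none := by
    intro m hm
    rw [hSdef] at hm
    rcases hm with ⟨n, v, hbv, rfl⟩ | ⟨i, hc⟩
    · rw [hσt (σpos v) v (hσpos_spec v (hbV n v hbv))]; simp
    · rw [hc]; simp
  -- total extension of the enumeration of S
  obtain ⟨G1, hG1mono, hG1⟩ := extend_mono (enum S) (enum_stable S) (enum_lt S)
  have henum_inj : ∀ n n' m, enum S n = some m → enum S n' = some m → n = n' := by
    intro n n' m h h'
    have e1 := hG1 n m h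
    have e2 := hG1 n' m h'
    exact hG1mono.injective (by omega)
  set epos : ℕ → ℕ := fun m => choosePos (enum S) m with heposdef
  have hepos_spec : ∀ m, S m → enum S (epos m) = some m := fun m hm =>
    choosePos_spec (enum S) m (enum_surj S m hm)
  -- the sampled trace
  have hstab : ∀ n, (enum S n).bind t.f = none → (enum S (n+1)).bind t.f = none := by
    intro n hn
    cases h : enum S n with
    | none => rw [enum_stable S n h]; rfl
    | some m =>
      rw [h] at hn
      exact absurd hn (hS_some m (enum_mem S n m h))
  set t' : Trace (FDAct P E) := ⟨fun n => (enum S n).bind t.f, hstab⟩ with ht'def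
  have ht'f : ∀ n, t'.f n = (enum S n).bind t.f := fun n => rfl
  -- mapping positions of b to positions of t'
  set fb : ℕ → Option ℕ := fun j => (b.f j).map (fun v => epos (g (σpos v))) with hfbdef
  have hfb_stable : ∀ j, fb j = none → fb (j+1) = none := by
    intro j h
    rw [hfbdef] at h ⊢
    simp only [Option.map_eq_none_iff] at h ⊢
    exact b.stable j h
  have hfb_lt : ∀ j a c, fb j = some a → fb (j+1) = some c → a < c := by
    intro j a c ha hc
    rw [hfbdef] at ha hc
    simp only [Option.map_eq_some_iff] at ha hc
    obtain ⟨u, hu, rfl⟩ := ha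
    obtain ⟨v, hv, rfl⟩ := hc
    have huV := hbV j u hu
    have hvV := hbV _ v hv
    have hσlt : σpos u < σpos v :=
      hσord _ _ u v (hσpos_spec u huV) (hσpos_spec v hvV) (hbZ j u v hu hv)
    have hglt : g (σpos u) < g (σpos v) := hgmono hσlt
    have h1 := hG1 _ _ (hepos_spec _ (mS j u hu))
    have h2 := hG1 _ _ (hepos_spec _ (mS (j+1) v hv))
    rw [← hG1mono.lt_iff_lt]
    omega
  obtain ⟨gb, hgbmono, hgb⟩ := extend_mono fb hfb_stable hfb_lt
  have hgb_eq : ∀ j v, b.f j = some v → gb j = epos (g (σpos v)) := by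
    intro j v h
    exact hgb j _ (by rw [hfbdef]; simp [h])
  have ht'b : ∀ j v, b.f j = some v → t'.f (gb j) = some (FDAct.out v.2.2) := by
    intro j v h
    rw [hgb_eq j v h, ht'f, hepos_spec _ (mS j v h)]
    simpa using hσt (σpos v) v (hσpos_spec v (hbV j v h))
  refine ⟨t', ⟨G1, hG1mono, ?_⟩, ⟨?_, ?_⟩, gb, hgbmono, ht'b, ?_⟩
  · -- subsequence
    intro n a hna
    rw [ht'f] at hna
    obtain ⟨m, hm, htm⟩ := Option.bind_eq_some_iff.mp hna
    rw [hG1 n m hm]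
    exact htm
  · -- validity part 1
    intro i n m e hcn hnm hout
    rw [ht'f] at hcn hout
    obtain ⟨p, hp, hcp⟩ := Option.bind_eq_some_iff.mp hcn
    obtain ⟨q, hq, hoq⟩ := Option.bind_eq_some_iff.mp hout
    have hpq : p < q := by
      have e1 := hG1 n p hp
      have e2 := hG1 m q hq
      have := hG1mono hnm
      omega
    exact hval.1 i p q e hcp hpq hoq
  · -- validity part 2
    intro i hnc
    by_cases hc : FDCrashes t i
    · exfalso
      obtain ⟨p, hp⟩ := hc
      have hpS : S p := by rw [hSdef]; exact Or.inr ⟨i, hp⟩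
      refine hnc ⟨epos p, ?_⟩
      rw [ht'f, hepos_spec p hpS]
      simpa using hp
    · have hinf := hval.2 i hc
      have hlive : G.live i := by
        rw [Observation.live]
        by_contra hfin
        rw [Set.not_infinite] at hfin
        have hsub : {m | ∃ e, loc e = i ∧ t.f m = some (FDAct.out e)} ⊆
            (fun v => g (σpos v)) '' {v ∈ G.V | v.1 = i} := by
          rintro m ⟨e, hle, hme⟩
          obtain ⟨n, v, hσn, hve, hgn⟩ := htσ m e hme
          have hvV := hσV n v hσn
          have hvi : v.1 = i := by rw [← hloc v hvV, hve]; exact hle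
          have hnp : n = σpos v := (hσuniq v hvV).unique hσn (hσpos_spec v hvV)
          exact ⟨v, ⟨hvV, hvi⟩, by show g (σpos v) = m; rw [← hnp]; exact hgn⟩
        exact hinf ((hfin.image _).subset hsub)
      have hbinf := hbfair i hlive
      have hmt : Set.MapsTo gb {n | ∃ v, b.f n = some v ∧ v.1 = i}
          {n | ∃ e, loc e = i ∧ t'.f n = some (FDAct.out e)} := by
        rintro j ⟨v, hv, hvi⟩
        exact ⟨v.2.2, by rw [hloc v (hbV j v hv)]; exact hvi, ht'b j v hv⟩
      exact ((hbinf.image hgbmono.injective.injOn).mono (Set.mapsTo_iff_image_subset.mp hmt))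
  · -- out projection, second clause
    intro m e hme
    rw [ht'f] at hme
    obtain ⟨q, hq, hoq⟩ := Option.bind_eq_some_iff.mp hme
    have hqS := enum_mem S m q hq
    rw [hSdef] at hqS
    rcases hqS with ⟨j, v, hbv, rfl⟩ | ⟨i, hci⟩
    · have hout := hσt (σpos v) v (hσpos_spec v (hbV j v hbv))
      have hev : v.2.2 = e := by
        have := hout.symm.trans hoq
        simpa using this
      refine ⟨j, v, hbv, hev, ?_⟩
      rw [hgb_eq j v hbv]
      exact henum_inj _ _ _ (hepos_spec _ (mS j v hbv)) hq
    · rw [hci] at hoq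
      simp at hoq
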